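/- Let K ≥ 1, n ≥ 1, and let N₁,…,N_K be nonnegative integers with ∑_{i=1}^K N_i = n. Let σ_i > 0 and σ_{0,i} > 0 for each i, and let L ≥ 0. Then ∑_{i=1}^K ∑_{s=0}^{N_i − 1} √(2 σ_i² L/(σ_i²/σ_{0,i}² + s)) ≤ √(2 n L) · √(∑_{i=1}^K σ_i² (log(1 + n σ_{0,i}²/σ_i²) + σ_{0,i}²/σ_i²)). (The inner sum is empty, hence zero, when N_i = 0.) -/

import Mathlib

lemma harmonic_log_bound (c : ℝ) (hc : 0 < c) (m : ℕ) :
    ∑ s ∈ Finset.range (m + 1), 1 / (c + s) ≤ 1 / c + Real.log ((c + m) / c) := by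
  induction m with
  | zero => simp [div_self hc.ne']
  | succ m ih =>
    rw [Finset.sum_range_succ]
    have hx : (0:ℝ) < c + m := by positivity
    have hy : (0:ℝ) < c + (m + 1) := by positivity
    have key : 1 / (c + (m + 1)) ≤ Real.log (c + (m + 1)) - Real.log (c + m) := by
      have h1 : Real.log ((c + m) / (c + (m + 1))) ≤ (c + m) / (c + (m + 1)) - 1 :=
        Real.log_le_sub_one_of_pos (by positivity)
      rw [Real.log_div hx.ne' hy.ne'] at h1
      have h2 : (c + m) / (c + (m + 1)) - 1 = -(1 / (c + (m + 1))) := by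
        field_simp
        ring
      rw [h2] at h1; linarith
    have e1 : Real.log ((c + m) / c) = Real.log (c + m) - Real.log c :=
      Real.log_div hx.ne' hc.ne'
    have e2 : Real.log ((c + ↑(m + 1)) / c) = Real.log (c + (m + 1)) - Real.log c := by
      push_cast
      exact Real.log_div hy.ne' hc.ne'
    push_cast at *
    linarith

theorem confidence_width_sum_le
    (K n : ℕ) (hK : 1 ≤ K) (hn : 1 ≤ n) (N : Fin K → ℕ) (hN : ∑ i, N i = n)
    (σ σ₀ : Fin K → ℝ) (hσ : ∀ i, 0 < σ i) (hσ₀ : ∀ i, 0 < σ₀ i) (L : ℝ) (hL : 0 ≤ L) :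
    (∑ i, ∑ s ∈ Finset.range (N i),
        Real.sqrt (2 * σ i ^ 2 * L / (σ i ^ 2 / σ₀ i ^ 2 + s))) ≤
      Real.sqrt (2 * n * L) *
        Real.sqrt (∑ i, σ i ^ 2 *
          (Real.log (1 + n * σ₀ i ^ 2 / σ i ^ 2) + σ₀ i ^ 2 / σ i ^ 2)) := by
  set c : Fin K → ℝ := fun i => σ i ^ 2 / σ₀ i ^ 2 with hc
  have hcpos : ∀ i, 0 < c i := fun i => by have := hσ i; have := hσ₀ i; positivity
  set a : Fin K → ℕ → ℝ := fun i s => 2 * σ i ^ 2 * L / (c i + s) with ha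
  have hapos : ∀ i s, 0 ≤ a i s := fun i s => by
    have := hσ i; have := hcpos i; positivity
  set T := (Finset.univ : Finset (Fin K)).sigma (fun i => Finset.range (N i)) with hT
  have hcard : T.card = n := by
    rw [hT, Finset.card_sigma]
    simpa using hN
  -- Cauchy-Schwarz step
  have hCS : (∑ i, ∑ s ∈ Finset.range (N i), Real.sqrt (a i s)) ^ 2
      ≤ n * ∑ i, ∑ s ∈ Finset.range (N i), a i s := by
    have h1 : (∑ i, ∑ s ∈ Finset.range (N i), Real.sqrt (a i s))
        = ∑ p ∈ T, Real.sqrt (a p.1 p.2) := by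
      rw [hT, Finset.sum_sigma]
    have h2 : (∑ i, ∑ s ∈ Finset.range (N i), a i s) = ∑ p ∈ T, a p.1 p.2 := by
      rw [hT, Finset.sum_sigma]
    rw [h1, h2]
    have := sq_sum_le_card_mul_sum_sq (s := T) (f := fun p => Real.sqrt (a p.1 p.2))
    calc (∑ p ∈ T, Real.sqrt (a p.1 p.2)) ^ 2
        ≤ T.card * ∑ p ∈ T, Real.sqrt (a p.1 p.2) ^ 2 := this
      _ = n * ∑ p ∈ T, a p.1 p.2 := by
          rw [hcard]
          congr 1
          exact Finset.sum_congr rfl fun p _ => Real.sq_sqrt (hapos p.1 p.2)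
  -- per-arm bound
  have hperm : ∀ i, ∑ s ∈ Finset.range (N i), a i s
      ≤ 2 * L * (σ i ^ 2 * (Real.log (1 + n * σ₀ i ^ 2 / σ i ^ 2) + σ₀ i ^ 2 / σ i ^ 2)) := by
    intro i
    have hσi := hσ i
    have hσ₀i := hσ₀ i
    have hci := hcpos i
    have hsum : ∑ s ∈ Finset.range (N i), a i s
        = 2 * σ i ^ 2 * L * ∑ s ∈ Finset.range (N i), 1 / (c i + s) := by
      rw [Finset.mul_sum]
      exact Finset.sum_congr rfl fun s _ => by rw [ha]; ring
    have hbound : ∑ s ∈ Finset.range (N i), 1 / (c i + s)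
        ≤ Real.log (1 + n * σ₀ i ^ 2 / σ i ^ 2) + σ₀ i ^ 2 / σ i ^ 2 := by
      have hinvc : 1 / c i = σ₀ i ^ 2 / σ i ^ 2 := by
        rw [hc]; field_simp
      have hlogpos : 0 ≤ Real.log (1 + n * σ₀ i ^ 2 / σ i ^ 2) := by
        apply Real.log_nonneg
        have : 0 ≤ (n : ℝ) * σ₀ i ^ 2 / σ i ^ 2 := by positivity
        linarith
      rcases Nat.eq_zero_or_pos (N i) with h0 | hpos
      · rw [h0]
        simp only [Finset.range_zero, Finset.sum_empty]
        have : 0 ≤ σ₀ i ^ 2 / σ i ^ 2 := by positivity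
        linarith
      · obtain ⟨m, hm⟩ : ∃ m, N i = m + 1 := ⟨N i - 1, (Nat.succ_pred_eq_of_pos hpos).symm⟩
        rw [hm]
        have h1 := harmonic_log_bound (c i) hci m
        have hmn : (m : ℝ) ≤ n := by
          have : N i ≤ n := hN ▸ Finset.single_le_sum (fun j _ => Nat.zero_le (N j)) (Finset.mem_univ i)
          have : m + 1 ≤ n := hm ▸ this
          exact_mod_cast Nat.le_of_succ_le this
        have hlog : Real.log ((c i + m) / c i) ≤ Real.log (1 + n * σ₀ i ^ 2 / σ i ^ 2) := by
          apply Real.log_le_log (by positivity)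
          have harg : (c i + m) / c i = 1 + m * σ₀ i ^ 2 / σ i ^ 2 := by
            rw [hc]; field_simp
          rw [harg]
          have h3 : (m : ℝ) * σ₀ i ^ 2 / σ i ^ 2 ≤ n * σ₀ i ^ 2 / σ i ^ 2 := by
            gcongr
          linarith
        calc ∑ s ∈ Finset.range (m + 1), 1 / (c i + s)
            ≤ 1 / c i + Real.log ((c i + m) / c i) := h1
          _ ≤ Real.log (1 + n * σ₀ i ^ 2 / σ i ^ 2) + σ₀ i ^ 2 / σ i ^ 2 := by
              rw [hinvc]; linarith
    calc ∑ s ∈ Finset.range (N i), a i s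
        = 2 * σ i ^ 2 * L * ∑ s ∈ Finset.range (N i), 1 / (c i + s) := hsum
      _ ≤ 2 * σ i ^ 2 * L * (Real.log (1 + n * σ₀ i ^ 2 / σ i ^ 2) + σ₀ i ^ 2 / σ i ^ 2) := by
          apply mul_le_mul_of_nonneg_left hbound (by positivity)
      _ = 2 * L * (σ i ^ 2 * (Real.log (1 + n * σ₀ i ^ 2 / σ i ^ 2) + σ₀ i ^ 2 / σ i ^ 2)) := by
          ring
  -- assemble
  set R := ∑ i, σ i ^ 2 * (Real.log (1 + (n:ℝ) * σ₀ i ^ 2 / σ i ^ 2) + σ₀ i ^ 2 / σ i ^ 2) with hR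
  have hRnn : 0 ≤ R := by
    apply Finset.sum_nonneg
    intro i _
    have hσi := hσ i; have hσ₀i := hσ₀ i
    have hlogpos : 0 ≤ Real.log (1 + (n:ℝ) * σ₀ i ^ 2 / σ i ^ 2) := by
      apply Real.log_nonneg
      have : 0 ≤ (n : ℝ) * σ₀ i ^ 2 / σ i ^ 2 := by positivity
      linarith
    have : 0 ≤ σ₀ i ^ 2 / σ i ^ 2 := by positivity
    positivity
  have hS : (∑ i, ∑ s ∈ Finset.range (N i), Real.sqrt (a i s)) ^ 2 ≤ 2 * n * L * R := by
    calc (∑ i, ∑ s ∈ Finset.range (N i), Real.sqrt (a i s)) ^ 2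
        ≤ n * ∑ i, ∑ s ∈ Finset.range (N i), a i s := hCS
      _ ≤ n * ∑ i, 2 * L * (σ i ^ 2 * (Real.log (1 + n * σ₀ i ^ 2 / σ i ^ 2) + σ₀ i ^ 2 / σ i ^ 2)) := by
          apply mul_le_mul_of_nonneg_left _ (by positivity)
          exact Finset.sum_le_sum fun i _ => hperm i
      _ = 2 * n * L * R := by
          rw [hR, Finset.mul_sum, Finset.mul_sum]
          exact Finset.sum_congr rfl fun i _ => by ring
  have hLHSnn : 0 ≤ ∑ i, ∑ s ∈ Finset.range (N i), Real.sqrt (a i s) := by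
    apply Finset.sum_nonneg; intro i _
    exact Finset.sum_nonneg fun s _ => Real.sqrt_nonneg _
  calc ∑ i, ∑ s ∈ Finset.range (N i), Real.sqrt (a i s)
      = Real.sqrt ((∑ i, ∑ s ∈ Finset.range (N i), Real.sqrt (a i s)) ^ 2) := by
        rw [Real.sqrt_sq hLHSnn]
    _ ≤ Real.sqrt (2 * n * L * R) := Real.sqrt_le_sqrt hS
    _ = Real.sqrt (2 * n * L) * Real.sqrt R := Real.sqrt_mul (by positivity) R
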